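/- Let a > 0, n > 1, h_c > 0, v_e > 0, and define x(v) = (2/h_c)/(v_e - v) + h_c a^2/(2(2n-1) v^{2n-1}) for v > v_e. Then x solves dx/dv = (h_c/2)(x - x_+(v))(x - x_-(v)) with x_±(v) = ±a/v^n + h_c a^2/(2(2n-1) v^{2n-1}), and lim_{v→∞} x(v) = 0 with x(v) < x_EH(v) := h_c a^2/(2(2n-1) v^{2n-1}) for all v > v_e. -/

import Mathlib

/-- Interior solution in the solvable model with `n > 1`:
`x(v) = (2/h_c)/(v_e - v) + h_c a²/(2(2n-1) v^{2n-1})` on `(v_e, ∞)` solves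
`dx/dv = (h_c/2)(x - x₊(v))(x - x₋(v))`, tends to `0` as `v → ∞`, and satisfies
`x(v) < x_EH(v) = h_c a²/(2(2n-1) v^{2n-1})` for all `v > v_e`. -/
theorem stmt14 (a n hc ve : ℝ) (ha : 0 < a) (hn : 1 < n) (hhc : 0 < hc) (hve : 0 < ve)
    (xp xm x xEH : ℝ → ℝ)
    (hxp : ∀ v : ℝ, xp v = a / v ^ n + hc * a ^ 2 / (2 * (2 * n - 1) * v ^ (2 * n - 1)))
    (hxm : ∀ v : ℝ, xm v = -(a / v ^ n) + hc * a ^ 2 / (2 * (2 * n - 1) * v ^ (2 * n - 1)))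
    (hx : ∀ v : ℝ, x v = (2 / hc) / (ve - v) + hc * a ^ 2 / (2 * (2 * n - 1) * v ^ (2 * n - 1)))
    (hxEH : ∀ v : ℝ, xEH v = hc * a ^ 2 / (2 * (2 * n - 1) * v ^ (2 * n - 1))) :
    (∀ v ∈ Set.Ioi ve, HasDerivAt x (hc / 2 * (x v - xp v) * (x v - xm v)) v) ∧
    Filter.Tendsto x Filter.atTop (nhds 0) ∧
    (∀ v ∈ Set.Ioi ve, x v < xEH v) := by
  have hp : (0:ℝ) < 2 * n - 1 := by linarith
  refine ⟨?_, ?_, ?_⟩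
  · intro v hv
    have hvv : ve < v := hv
    have hv0 : (0:ℝ) < v := hve.trans hvv
    have hne : ve - v ≠ 0 := by intro h; linarith [sub_eq_zero.mp h]
    set p : ℝ := 2 * n - 1 with hpdef
    -- derivative of the explicit function g
    have h1 : HasDerivAt (fun w : ℝ => ve - w) (-1) v := by
      simpa using (hasDerivAt_id v).const_sub ve
    have t1 : HasDerivAt (fun w : ℝ => (2 / hc) / (ve - w))
        ((0 * (ve - v) - (2 / hc) * (-1)) / (ve - v) ^ 2) v :=
      (hasDerivAt_const v (2 / hc)).div h1 hne
    have t2 : HasDerivAt (fun w : ℝ => w ^ (-p)) (-p * v ^ (-p - 1)) v :=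
      Real.hasDerivAt_rpow_const (Or.inl hv0.ne')
    have t2' : HasDerivAt (fun w : ℝ => hc * a ^ 2 / (2 * p) * w ^ (-p))
        (hc * a ^ 2 / (2 * p) * (-p * v ^ (-p - 1))) v := t2.const_mul _
    have hg : HasDerivAt (fun w : ℝ => (2 / hc) / (ve - w) + hc * a ^ 2 / (2 * p) * w ^ (-p))
        ((0 * (ve - v) - (2 / hc) * (-1)) / (ve - v) ^ 2
          + hc * a ^ 2 / (2 * p) * (-p * v ^ (-p - 1))) v := t1.add t2'
    -- x agrees with g near v
    have hEq : x =ᶠ[nhds v] (fun w : ℝ => (2 / hc) / (ve - w) + hc * a ^ 2 / (2 * p) * w ^ (-p)) := by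
      filter_upwards [Ioi_mem_nhds hv0] with w hw
      have hw0 : (0:ℝ) < w := hw
      rw [hx w, Real.rpow_neg hw0.le]
      have hwp : w ^ p ≠ 0 := (Real.rpow_pos_of_pos hw0 p).ne'
      field_simp
    have hx' := hg.congr_of_eventuallyEq hEq
    -- now show the derivative values match
    have hBn : (0:ℝ) < v ^ n := Real.rpow_pos_of_pos hv0 n
    have hBp : (0:ℝ) < v ^ p := Real.rpow_pos_of_pos hv0 p
    have e1 : v ^ (-p - 1) = (v ^ n * v ^ n)⁻¹ := by
      rw [← Real.rpow_add hv0, ← Real.rpow_neg hv0.le]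
      congr 1
      rw [hpdef]; ring
    refine hx'.congr_deriv (Eq.symm ?_)
    rw [hx v, hxp v, hxm v, e1]
    have hp0 : p ≠ 0 := hp.ne'
    field_simp
    ring
  · -- tendsto
    have h1 : Filter.Tendsto (fun v : ℝ => (2 / hc) / (ve - v)) Filter.atTop (nhds 0) := by
      have h : Filter.Tendsto (fun v : ℝ => v - ve) Filter.atTop Filter.atTop :=
        Filter.tendsto_atTop_add_const_right _ _ Filter.tendsto_id
      have h2 := ((h.inv_tendsto_atTop).const_mul (2 / hc)).neg
      rw [mul_zero, neg_zero] at h2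
      refine h2.congr fun v => ?_
      simp only [Pi.inv_apply, div_eq_mul_inv, show ve - v = -(v - ve) by ring, inv_neg,
        mul_neg]
    have h2 : Filter.Tendsto (fun v : ℝ => hc * a ^ 2 / (2 * (2 * n - 1) * v ^ (2 * n - 1)))
        Filter.atTop (nhds 0) := by
      apply Filter.Tendsto.div_atTop (tendsto_const_nhds)
      exact (tendsto_rpow_atTop hp).const_mul_atTop (by linarith : (0:ℝ) < 2 * (2 * n - 1))
    have := h1.add h2
    simpa [hx] using this.congr fun v => (hx v).symm
  · intro v hv
    have hvv : ve < v := hv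
    have hneg : (2 / hc) / (ve - v) < 0 :=
      div_neg_of_pos_of_neg (by positivity) (by linarith)
    rw [hx v, hxEH v]
    linarith
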